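/- Let φ ∈ ℝ, let U be a unitary on ℂ², and set G := C_φ (U ⊗ U) C_φ. Suppose there exist orthonormal bases {|μ₀⟩, |μ₁⟩} and {|μ̃₀⟩, |μ̃₁⟩} of ℂ² such that G (|μ_i⟩⟨μ_i| ⊗ |μ_j⟩⟨μ_j|) G* = |μ̃_i⟩⟨μ̃_i| ⊗ |μ̃_j⟩⟨μ̃_j| for all i, j ∈ {0,1}. Then e^{iφ} = 1, or U is diagonal in the computational basis, or U is antidiagonal in the computational basis. -/

import Mathlib

open Kronecker Matrix

noncomputable section

/-- The controlled-phase gate `C_φ` on `ℂ² ⊗ ℂ²`: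
`C_φ (|a⟩⊗|b⟩) = e^{iφab} |a⟩⊗|b⟩`. -/
def Cphase (φ : ℝ) : Matrix (Fin 2 × Fin 2) (Fin 2 × Fin 2) ℂ :=
  Matrix.diagonal fun p => Complex.exp (Complex.I * (φ : ℂ) * (p.1.val : ℂ) * (p.2.val : ℂ))

/-- The rank-one operator `|v⟩⟨v|`. -/
def outer (v : Fin 2 → ℂ) : Matrix (Fin 2) (Fin 2) ℂ := Matrix.vecMulVec v (star v)

def COm (ω : ℂ) : Matrix (Fin 2 × Fin 2) (Fin 2 × Fin 2) ℂ :=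
  Matrix.diagonal fun p => ω ^ (p.1.val * p.2.val)

def Gm (ω : ℂ) (U : Matrix (Fin 2) (Fin 2) ℂ) : Matrix (Fin 2 × Fin 2) (Fin 2 × Fin 2) ℂ :=
  COm ω * (U ⊗ₖ U) * COm ω

lemma Gm_apply (ω : ℂ) (U : Matrix (Fin 2) (Fin 2) ℂ) (p q : Fin 2 × Fin 2) :
    Gm ω U p q = ω ^ (p.1.val * p.2.val) * (U p.1 q.1 * U p.2 q.2) * ω ^ (q.1.val * q.2.val) := by
  simp [Gm, COm, Matrix.diagonal_mul, Matrix.mul_diagonal, Matrix.kroneckerMap_apply]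

lemma Cphase_eq (φ : ℝ) : Cphase φ = COm (Complex.exp (Complex.I * φ)) := by
  ext ⟨a, b⟩ ⟨c, d⟩
  fin_cases a <;> fin_cases b <;> fin_cases c <;> fin_cases d <;>
    simp [Cphase, COm, Matrix.diagonal_apply]

lemma Gm_conjT (ω : ℂ) (U : Matrix (Fin 2) (Fin 2) ℂ) :
    (Gm ω U)ᴴ = Gm (star ω) Uᴴ := by
  ext p q
  simp [Matrix.conjTranspose_apply, Gm_apply]
  ring

lemma Gm_unitary (ω : ℂ) (U : Matrix (Fin 2) (Fin 2) ℂ) (hωs : star ω * ω = 1)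
    (hUU : Uᴴ * U = 1) : (Gm ω U)ᴴ * Gm ω U = 1 := by
  rw [Gm_conjT]
  unfold Gm
  have hC : COm (star ω) * COm ω = 1 := by
    unfold COm
    rw [Matrix.diagonal_mul_diagonal]
    have : (fun p : Fin 2 × Fin 2 => star ω ^ (p.1.val * p.2.val) * ω ^ (p.1.val * p.2.val))
        = fun _ => (1 : ℂ) := funext fun p => by rw [← mul_pow, hωs, one_pow]
    rw [this, Matrix.diagonal_one]
  calc COm (star ω) * (Uᴴ ⊗ₖ Uᴴ) * COm (star ω) * (COm ω * (U ⊗ₖ U) * COm ω)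
      = COm (star ω) * ((Uᴴ ⊗ₖ Uᴴ) * ((COm (star ω) * COm ω) * (U ⊗ₖ U))) * COm ω := by
        simp only [Matrix.mul_assoc]
    _ = 1 := by
        rw [hC, Matrix.one_mul, ← Matrix.mul_kronecker_mul, hUU, Matrix.one_kronecker_one,
          Matrix.mul_one, hC]

lemma completeness (v : Fin 2 → Fin 2 → ℂ)
    (hv : ∀ i j, dotProduct (star (v i)) (v j) = if i = j then 1 else 0) :
    outer (v 0) + outer (v 1) = 1 := by
  have hN : (Matrix.of fun k i => v i k)ᴴ * (Matrix.of fun k i => v i k) = 1 := by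
    ext i j
    simpa [Matrix.mul_apply, Matrix.conjTranspose_apply, dotProduct, Matrix.one_apply]
      using hv i j
  have hN2 := mul_eq_one_comm.mp hN
  ext k l
  have := congrFun (congrFun hN2 k) l
  simpa [Matrix.mul_apply, Matrix.conjTranspose_apply, outer, Matrix.vecMulVec_apply,
    Fin.sum_univ_two, Matrix.one_apply] using this

lemma extract (ω : ℂ) (U A B : Matrix (Fin 2) (Fin 2) ℂ)
    (hω : ω ≠ 1) (hωs : ω * star ω = 1)
    (hr01 : U 0 0 * star (U 1 0) + U 0 1 * star (U 1 1) = 0)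
    (hn0 : U 0 0 * star (U 0 0) + U 0 1 * star (U 0 1) = 1)
    (hn1 : U 1 0 * star (U 1 0) + U 1 1 * star (U 1 1) = 1)
    (h00 : U 0 0 ≠ 0) (h10 : U 1 0 ≠ 0)
    (hAB : Gm ω U * (A ⊗ₖ (1 : Matrix (Fin 2) (Fin 2) ℂ)) * (Gm ω U)ᴴ
      = B ⊗ₖ (1 : Matrix (Fin 2) (Fin 2) ℂ)) :
    B 0 1 = 0 := by
  have hE1 := congrFun (congrFun hAB ((0 : Fin 2), (0 : Fin 2))) ((1 : Fin 2), (1 : Fin 2))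
  have hE2 := congrFun (congrFun hAB ((0 : Fin 2), (0 : Fin 2))) ((1 : Fin 2), (0 : Fin 2))
  have hE3 := congrFun (congrFun hAB ((0 : Fin 2), (1 : Fin 2))) ((1 : Fin 2), (1 : Fin 2))
  simp only [Matrix.mul_apply, Fintype.sum_prod_type, Fin.sum_univ_two, Gm_apply,
    Matrix.conjTranspose_apply, Matrix.kroneckerMap_apply, Matrix.one_apply,
    Fin.val_zero, Fin.val_one, pow_zero, pow_one, mul_zero, zero_mul, mul_one, one_mul,
    star_mul', star_pow, star_one, if_true, if_false, Fin.zero_eq_one_iff, Fin.one_eq_zero_iff,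
    Nat.succ_ne_self, ite_true, ite_false, reduceIte, Fin.isValue] at hE1 hE2 hE3
  have key : B 0 1 * ((1 - ω) * (U 0 0 * star (U 1 0))) = 0 := by
    linear_combination (norm := ring_nf)
      (((-(U 1 0 * star (U 1 0) * ω)) + (U 0 0 * star (U 0 0) * ω))) * hE1
      + (-(U 0 0 * star (U 1 0))) * hE2
      + (U 0 0 * star (U 1 0) * ω) * hE3
      + ((U 0 1 * U 0 1 * U 1 0 * star (U 1 0) * star (U 1 1) * star (U 1 1) * A 1 1) + (U 0 1 * U 0 1 * U 1 0 * star (U 1 0) * star (U 1 1) * star (U 1 1) * A 1 1 * ω * star ω) + (U 0 1 * U 0 1 * U 1 0 * star (U 1 0) * star (U 1 0) * star (U 1 1) * A 1 0 * ω) + (-(U 0 0 * U 0 1 * U 1 1 * star (U 1 0) * star (U 1 1) * star (U 1 1) * A 1 1)) + (-(U 0 0 * U 0 1 * U 1 1 * star (U 1 0) * star (U 1 1) * star (U 1 1) * A 1 1 * ω * star ω)) + (-(U 0 0 * U 0 1 * U 1 1 * star (U 1 0) * star (U 1 0) * star (U 1 1) * A 1 0 * ω)) + (U 0 0 * U 0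 1 * U 1 0 * star (U 1 0) * star (U 1 1) * star (U 1 1) * A 0 1 * star ω) + (U 0 0 * U 0 1 * U 1 0 * star (U 1 0) * star (U 1 0) * star (U 1 1) * A 0 0) + (U 0 0 * U 0 1 * U 0 1 * star (U 0 1) * star (U 1 0) * star (U 1 1) * A 1 1) + (-(U 0 0 * U 0 1 * U 0 1 * star (U 0 0) * star (U 1 1) * star (U 1 1) * A 1 1)) + (-(U 0 0 * U 0 1 * U 0 1 * star (U 0 0) * star (U 1 1) * star (U 1 1) * A 1 1 * ω * star ω)) + (-(U 0 0 * U 0 1 * U 0 1 * star (U 0 0) * star (U 1 0) * star (U 1 1) * A 1 0 * ω)) + (-(U 0 0 * U 0 0 * U 1 1 * star (U 1 0) * star (U 1 1) * star (U 1 1) * A 0 1 * star ω)) + (-(U 0 0 * U 0 0 * U 1 1 * star (U 1 0) * star (U 1 0) * star (U 1 1) * A 0 0)) + (-(U 0 0 * U 0 0 * U 0 1 * star (U 0 0) * star (U 1 1) * star (U 1 1) * A 0 1 * star ω)) + (-(U 0 0 * U 0 0 * U 0 1 * star (U 0 0) * star (U 1 0) * star (U 1 1) * A 1 1)) + (-(U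 0 0 * U 0 0 * U 0 1 * star (U 0 0) * star (U 1 0) * star (U 1 1) * A 0 0)) + (-(U 0 0 * U 0 0 * U 0 1 * star (U 0 0) * star (U 1 0) * star (U 1 0) * A 1 0)) + (-(U 0 0 * U 0 0 * U 0 0 * star (U 0 0) * star (U 1 0) * star (U 1 1) * A 0 1)) + (-(U 0 0 * U 0 0 * U 0 0 * star (U 0 0) * star (U 1 0) * star (U 1 0) * A 0 0))) * hωs
      + ((-(U 0 1 * U 1 1 * star (U 1 1) * star (U 1 1) * A 1 1)) + (U 0 1 * U 1 1 * star (U 1 1) * star (U 1 1) * A 0 0) + (-(U 0 1 * U 1 1 * star (U 1 0) * star (U 1 1) * A 1 0 * ω)) + (U 0 1 * U 1 0 * star (U 1 0) * star (U 1 1) * A 0 0) + (U 0 1 * U 0 1 * star (U 0 1) * star (U 1 1) * A 1 1) + (-(U 0 1 * U 0 1 * star (U 0 1) * star (U 1 1) * A 0 0)) + (U 0 1 * U 0 1 * star (U 0 1) * star (U 1 0) * A 1 0 * ω) + (-(U 0 0 * U 1 1 * star (U 1 1) * star (U 1 1) * A 0 1 * star ω)) + (-(U 0 0 * U 1 1 *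 star (U 1 0) * star (U 1 1) * A 0 0)) + (U 0 0 * U 0 1 * star (U 0 1) * star (U 1 1) * A 0 1 * star ω) + (U 0 0 * U 0 1 * star (U 0 1) * star (U 1 0) * A 0 0) + (-(U 0 0 * U 0 1 * star (U 0 0) * star (U 1 1) * A 0 0))) * hr01
      + ((-(U 0 1 * U 0 1 * star (U 1 1) * star (U 1 1) * A 1 1)) + (U 0 1 * U 0 1 * star (U 1 1) * star (U 1 1) * A 0 0) + (-(U 0 1 * U 0 1 * star (U 1 0) * star (U 1 1) * A 1 0 * ω)) + (-(U 0 0 * U 0 1 * star (U 1 1) * star (U 1 1) * A 0 1 * star ω))) * hn0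
      + ((U 0 1 * U 0 1 * star (U 1 1) * star (U 1 1) * A 1 1) + (-(U 0 1 * U 0 1 * star (U 1 1) * star (U 1 1) * A 0 0)) + (U 0 1 * U 0 1 * star (U 1 0) * star (U 1 1) * A 1 0 * ω) + (U 0 0 * U 0 1 * star (U 1 1) * star (U 1 1) * A 0 1 * star ω)) * hn1
  rcases mul_eq_zero.mp key with h | h
  · exact h
  rcases mul_eq_zero.mp h with h' | h'
  · exact absurd (by linear_combination -h') hω
  · rcases mul_eq_zero.mp h' with h'' | h''
    · exact absurd h'' h00
    · exact absurd h'' (star_ne_zero.mpr h10)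


/-- if `G = C_φ (U ⊗ U) C_φ` conjugates a product-projector orthonormal basis of
`ℂ² ⊗ ℂ²` to another one, then `e^{iφ} = 1`, or `U` is diagonal, or `U` is antidiagonal in the
computational basis. -/
theorem statement10 (φ : ℝ) (U : Matrix (Fin 2) (Fin 2) ℂ)
    (hU : U ∈ Matrix.unitaryGroup (Fin 2) ℂ)
    (G : Matrix (Fin 2 × Fin 2) (Fin 2 × Fin 2) ℂ)
    (hG : G = Cphase φ * (U ⊗ₖ U) * Cphase φ)
    (μ μt : Fin 2 → (Fin 2 → ℂ))
    (hμ : ∀ i j, dotProduct (star (μ i)) (μ j) = if i = j then 1 else 0)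
    (hμt : ∀ i j, dotProduct (star (μt i)) (μt j) = if i = j then 1 else 0)
    (h : ∀ i j, G * (outer (μ i) ⊗ₖ outer (μ j)) * Gᴴ = outer (μt i) ⊗ₖ outer (μt j)) :
    Complex.exp (Complex.I * (φ : ℂ)) = 1 ∨
    (U 0 1 = 0 ∧ U 1 0 = 0) ∨
    (U 0 0 = 0 ∧ U 1 1 = 0) := by
  set ω : ℂ := Complex.exp (Complex.I * (φ : ℂ)) with hωdef
  by_contra hc
  push_neg at hc
  obtain ⟨hω, hd, ha⟩ := hc
  have hGm : G = Gm ω U := by rw [hG, Cphase_eq]; rfl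
  rw [hGm] at h
  have hωs : ω * star ω = 1 := by
    rw [hωdef, Complex.star_def, ← Complex.exp_conj, ← Complex.exp_add]
    simp
  have hωs' : star ω * ω = 1 := by rw [mul_comm]; exact hωs
  have hsω : star ω ≠ 1 := fun hh => hω (by rw [← star_star ω, hh, star_one])
  have hsω0 : star ω ≠ 0 := fun hh => by rw [hh, mul_zero] at hωs; exact one_ne_zero hωs.symm
  have hω0 : ω ≠ 0 := fun hh => by rw [hh, zero_mul] at hωs; exact one_ne_zero hωs.symm
  have hUUs : U * Uᴴ = 1 := Matrix.mem_unitaryGroup_iff.mp hU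
  have hUsU : Uᴴ * U = 1 := Matrix.mem_unitaryGroup_iff'.mp hU
  have hr01 : U 0 0 * star (U 1 0) + U 0 1 * star (U 1 1) = 0 := by
    have := congrFun (congrFun hUUs 0) 1
    simpa [Matrix.mul_apply, Fin.sum_univ_two, Matrix.conjTranspose_apply, Matrix.one_apply]
      using this
  have hn0 : U 0 0 * star (U 0 0) + U 0 1 * star (U 0 1) = 1 := by
    have := congrFun (congrFun hUUs 0) 0
    simpa [Matrix.mul_apply, Fin.sum_univ_two, Matrix.conjTranspose_apply, Matrix.one_apply]
      using this
  have hn1 : U 1 0 * star (U 1 0) + U 1 1 * star (U 1 1) = 1 := by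
    have := congrFun (congrFun hUUs 1) 1
    simpa [Matrix.mul_apply, Fin.sum_univ_two, Matrix.conjTranspose_apply, Matrix.one_apply]
      using this
  have hc01 : star (U 0 0) * U 0 1 + star (U 1 0) * U 1 1 = 0 := by
    have := congrFun (congrFun hUsU 0) 1
    simpa [Matrix.mul_apply, Fin.sum_univ_two, Matrix.conjTranspose_apply, Matrix.one_apply]
      using this
  have hcn0 : star (U 0 0) * U 0 0 + star (U 1 0) * U 1 0 = 1 := by
    have := congrFun (congrFun hUsU 0) 0
    simpa [Matrix.mul_apply, Fin.sum_univ_two, Matrix.conjTranspose_apply, Matrix.one_apply]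
      using this
  have hcn1 : star (U 0 1) * U 0 1 + star (U 1 1) * U 1 1 = 1 := by
    have := congrFun (congrFun hUsU 1) 1
    simpa [Matrix.mul_apply, Fin.sum_univ_two, Matrix.conjTranspose_apply, Matrix.one_apply]
      using this
  -- all entries of U are nonzero
  have h01 : U 0 1 ≠ 0 := by
    intro hz
    have h11 : U 1 1 ≠ 0 := by
      intro hz1; rw [hz, hz1] at hcn1; simp at hcn1
    have h10z : U 1 0 = 0 := by
      have hh : star (U 1 0) * U 1 1 = 0 := by
        rw [hz] at hc01; simpa using hc01
      rcases mul_eq_zero.mp hh with hh | hh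
      · exact star_eq_zero.mp hh
      · exact absurd hh h11
    exact hd hz h10z
  have h10 : U 1 0 ≠ 0 := by
    intro hz
    have h11 : U 1 1 ≠ 0 := by
      intro hz1; rw [hz, hz1] at hn1; simp at hn1
    have h01z : U 0 1 = 0 := by
      have hh : U 0 1 * star (U 1 1) = 0 := by
        rw [hz] at hr01; simpa using hr01
      rcases mul_eq_zero.mp hh with hh | hh
      · exact hh
      · exact absurd (star_eq_zero.mp hh) h11
    exact hd h01z hz
  have h00 : U 0 0 ≠ 0 := by
    intro hz
    have h01' : U 0 1 ≠ 0 := h01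
    have h11z : U 1 1 = 0 := by
      have hh : U 0 1 * star (U 1 1) = 0 := by
        rw [hz] at hr01; simpa using hr01
      rcases mul_eq_zero.mp hh with hh | hh
      · exact absurd hh h01'
      · exact star_eq_zero.mp hh
    exact ha hz h11z
  have h11 : U 1 1 ≠ 0 := by
    intro hz
    have h00z : U 0 0 = 0 := by
      have hh : star (U 0 0) * U 0 1 = 0 := by
        rw [hz] at hc01; simpa using hc01
      rcases mul_eq_zero.mp hh with hh | hh
      · exact star_eq_zero.mp hh
      · exact absurd hh h01
    exact ha h00z hz
  -- Step A : μt 0 is (up to phase) a computational basis vector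
  have keyA : Gm ω U * (outer (μ 0) ⊗ₖ (1 : Matrix (Fin 2) (Fin 2) ℂ)) * (Gm ω U)ᴴ
      = outer (μt 0) ⊗ₖ (1 : Matrix (Fin 2) (Fin 2) ℂ) := by
    have hsum : Gm ω U * (outer (μ 0) ⊗ₖ (outer (μ 0) + outer (μ 1))) * (Gm ω U)ᴴ
        = outer (μt 0) ⊗ₖ (outer (μt 0) + outer (μt 1)) := by
      rw [Matrix.kronecker_add, Matrix.kronecker_add, Matrix.mul_add, Matrix.add_mul, h 0 0,
        h 0 1]
    rwa [completeness μ hμ, completeness μt hμt] at hsum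
  have stepA : outer (μt 0) 0 1 = 0 :=
    extract ω U _ _ hω hωs hr01 hn0 hn1 h00 h10 keyA
  -- Step B : μ 0 is (up to phase) a computational basis vector
  have hGuni : (Gm ω U)ᴴ * Gm ω U = 1 := Gm_unitary ω U hωs' hUsU
  have hGdd : (Gm (star ω) Uᴴ)ᴴ = Gm ω U := by
    rw [Gm_conjT, star_star, Matrix.conjTranspose_conjTranspose]
  have keyB : Gm (star ω) Uᴴ * (outer (μt 0) ⊗ₖ (1 : Matrix (Fin 2) (Fin 2) ℂ))
      * (Gm (star ω) Uᴴ)ᴴ = outer (μ 0) ⊗ₖ (1 : Matrix (Fin 2) (Fin 2) ℂ) := by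
    rw [hGdd, ← Gm_conjT, ← keyA]
    calc (Gm ω U)ᴴ * (Gm ω U * (outer (μ 0) ⊗ₖ (1 : Matrix (Fin 2) (Fin 2) ℂ)) * (Gm ω U)ᴴ)
          * Gm ω U
        = ((Gm ω U)ᴴ * Gm ω U) * (outer (μ 0) ⊗ₖ (1 : Matrix (Fin 2) (Fin 2) ℂ))
          * ((Gm ω U)ᴴ * Gm ω U) := by
          simp only [Matrix.mul_assoc]
      _ = _ := by rw [hGuni, Matrix.one_mul, Matrix.mul_one]
  have stepB : outer (μ 0) 0 1 = 0 := by
    refine extract (star ω) Uᴴ _ _ hsω (by rw [star_star]; exact hωs') ?_ ?_ ?_ ?_ ?_ keyB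
    · simpa [Matrix.conjTranspose_apply, star_star] using hc01
    · simpa [Matrix.conjTranspose_apply, star_star] using hcn0
    · simpa [Matrix.conjTranspose_apply, star_star] using hcn1
    · simpa [Matrix.conjTranspose_apply] using star_ne_zero.mpr h00
    · simpa [Matrix.conjTranspose_apply] using star_ne_zero.mpr h01
  -- scalar forms
  have stepAs : μt 0 0 * star (μt 0 1) = 0 := by
    simpa [outer, Matrix.vecMulVec_apply] using stepA
  have stepBs : μ 0 0 * star (μ 0 1) = 0 := by
    simpa [outer, Matrix.vecMulVec_apply] using stepB
  have hnorm : star (μ 0 0) * μ 0 0 + star (μ 0 1) * μ 0 1 = 1 := by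
    have := hμ 0 0
    simpa [dotProduct, Fin.sum_univ_two] using this
  -- the entry ((0,0),(1,1)) of h 0 0
  have hC := congrFun (congrFun (h 0 0) ((0 : Fin 2), (0 : Fin 2))) ((1 : Fin 2), (1 : Fin 2))
  simp only [Matrix.mul_apply, Fintype.sum_prod_type, Fin.sum_univ_two, Gm_apply,
    Matrix.conjTranspose_apply, Matrix.kroneckerMap_apply, Matrix.one_apply,
    Fin.val_zero, Fin.val_one, pow_zero, pow_one, mul_zero, zero_mul, mul_one, one_mul,
    star_mul', star_pow, star_one, outer, Matrix.vecMulVec_apply, Pi.star_apply,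
    Fin.isValue] at hC
  rcases mul_eq_zero.mp stepBs with hz | hz
  · -- μ 0 0 = 0
    rw [hz] at hC hnorm
    simp only [star_zero, mul_zero, zero_mul, add_zero, zero_add] at hC hnorm
    have hx : star (μ 0 1) * μ 0 1 = 1 := hnorm
    have hkey : ω * star ω * star ω * (U 0 1 * U 0 1) * (star (U 1 1) * star (U 1 1)) = 0 := by
      linear_combination hC
        - (ω * star ω * star ω * (U 0 1 * U 0 1) * (star (U 1 1) * star (U 1 1)))
          * (star (μ 0 1) * μ 0 1 + 1) * hx
        + (μt 0 0 * star (μt 0 1)) * stepAs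
    have : ω * star ω * star ω * (U 0 1 * U 0 1) * (star (U 1 1) * star (U 1 1)) ≠ 0 := by
      apply mul_ne_zero
      apply mul_ne_zero
      · exact mul_ne_zero (mul_ne_zero hω0 hsω0) hsω0
      · exact mul_ne_zero h01 h01
      · exact mul_ne_zero (star_ne_zero.mpr h11) (star_ne_zero.mpr h11)
    exact this hkey
  · -- μ 0 1 = 0
    have hz' : μ 0 1 = 0 := star_eq_zero.mp hz
    rw [hz'] at hC hnorm
    simp only [star_zero, mul_zero, zero_mul, add_zero, zero_add] at hC hnorm
    have hx : star (μ 0 0) * μ 0 0 = 1 := hnorm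
    have hkey : star ω * (U 0 0 * U 0 0) * (star (U 1 0) * star (U 1 0)) = 0 := by
      linear_combination hC
        - (star ω * (U 0 0 * U 0 0) * (star (U 1 0) * star (U 1 0)))
          * (star (μ 0 0) * μ 0 0 + 1) * hx
        + (μt 0 0 * star (μt 0 1)) * stepAs
    have : star ω * (U 0 0 * U 0 0) * (star (U 1 0) * star (U 1 0)) ≠ 0 := by
      apply mul_ne_zero
      apply mul_ne_zero hsω0
      · exact mul_ne_zero h00 h00
      · exact mul_ne_zero (star_ne_zero.mpr h10) (star_ne_zero.mpr h10)
    exact this hkey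


end
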